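/- For uniform cubic (degree 3) cardinal B-splines with spacing h, the quadrature rule supported on the 7 points consisting of the interior knots and midpoints of the knot-spans inside supp(B_i), with weights h·[1/105, 3/35, 5/21, 1/3, 5/21, 3/35, 1/105], exactly reproduces ∫ B_i B_j dζ for all j with |j - i| ≤ 3. -/

import Mathlib

open MeasureTheory

/-- The standard cubic cardinal B-spline with knots `0,1,2,3,4`. -/
noncomputable def N3 (t : ℝ) : ℝ :=
  if 0 ≤ t ∧ t ≤ 1 then t ^ 3 / 6
  else if 1 ≤ t ∧ t ≤ 2 then (-3 * t ^ 3 + 12 * t ^ 2 - 12 * t + 4) / 6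
  else if 2 ≤ t ∧ t ≤ 3 then
    (-3 * (4 - t) ^ 3 + 12 * (4 - t) ^ 2 - 12 * (4 - t) + 4) / 6
  else if 3 ≤ t ∧ t ≤ 4 then (4 - t) ^ 3 / 6
  else 0

/-- Uniform cubic cardinal B-spline with spacing `h`: the translate by `i·h`
of `N3(·/h)`, supported on `[i·h, (i+4)·h]`. -/
noncomputable def B3 (h : ℝ) (i : ℤ) (ζ : ℝ) : ℝ := N3 (ζ / h - (i : ℝ))

lemma N3_p0 {t : ℝ} (h1 : 0 ≤ t) (h2 : t ≤ 1) : N3 t = t ^ 3 / 6 := by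
  unfold N3; rw [if_pos ⟨h1, h2⟩]

lemma N3_p1 {t : ℝ} (h1 : 1 ≤ t) (h2 : t ≤ 2) :
    N3 t = (-3 * t ^ 3 + 12 * t ^ 2 - 12 * t + 4) / 6 := by
  unfold N3
  by_cases ha : 0 ≤ t ∧ t ≤ 1
  · rw [if_pos ha]
    have : t = 1 := le_antisymm ha.2 h1
    subst this; norm_num
  · rw [if_neg ha, if_pos ⟨h1, h2⟩]

lemma N3_p2 {t : ℝ} (h1 : 2 ≤ t) (h2 : t ≤ 3) :
    N3 t = (-3 * (4 - t) ^ 3 + 12 * (4 - t) ^ 2 - 12 * (4 - t) + 4) / 6 := by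
  unfold N3
  have ha : ¬ (0 ≤ t ∧ t ≤ 1) := by rintro ⟨-, h⟩; linarith
  rw [if_neg ha]
  by_cases hb : 1 ≤ t ∧ t ≤ 2
  · rw [if_pos hb]
    have : t = 2 := le_antisymm hb.2 h1
    subst this; norm_num
  · rw [if_neg hb, if_pos ⟨h1, h2⟩]

lemma N3_p3 {t : ℝ} (h1 : 3 ≤ t) (h2 : t ≤ 4) : N3 t = (4 - t) ^ 3 / 6 := by
  unfold N3
  have ha : ¬ (0 ≤ t ∧ t ≤ 1) := by rintro ⟨-, h⟩; linarith
  have hb : ¬ (1 ≤ t ∧ t ≤ 2) := by rintro ⟨-, h⟩; linarith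
  rw [if_neg ha, if_neg hb]
  by_cases hc : 2 ≤ t ∧ t ≤ 3
  · rw [if_pos hc]
    have : t = 3 := le_antisymm hc.2 h1
    subst this; norm_num
  · rw [if_neg hc, if_pos ⟨h1, h2⟩]

lemma N3_zl {t : ℝ} (ht : t ≤ 0) : N3 t = 0 := by
  unfold N3
  split_ifs with h1 h2 h3 h4
  · have : t = 0 := le_antisymm ht h1.1
    subst this; norm_num
  · linarith [h2.1]
  · linarith [h3.1]
  · linarith [h4.1]
  · rfl

lemma N3_zr {t : ℝ} (ht : 4 ≤ t) : N3 t = 0 := by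
  unfold N3
  split_ifs with h1 h2 h3 h4
  · linarith [h1.2]
  · linarith [h2.2]
  · linarith [h3.2]
  · have : t = 4 := le_antisymm h4.2 ht
    subst this; norm_num
  · rfl

lemma hasDeriv7 (c0 c1 c2 c3 c4 c5 c6 t : ℝ) :
    HasDerivAt (fun x : ℝ => c0 * x + c1 * x ^ 2 / 2 + c2 * x ^ 3 / 3 + c3 * x ^ 4 / 4
        + c4 * x ^ 5 / 5 + c5 * x ^ 6 / 6 + c6 * x ^ 7 / 7)
      (c0 + c1 * t + c2 * t ^ 2 + c3 * t ^ 3 + c4 * t ^ 4 + c5 * t ^ 5 + c6 * t ^ 6) t := by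
  have h := (((((((hasDerivAt_id t).const_mul c0).add
    (((hasDerivAt_pow 2 t).const_mul c1).div_const 2)).add
    (((hasDerivAt_pow 3 t).const_mul c2).div_const 3)).add
    (((hasDerivAt_pow 4 t).const_mul c3).div_const 4)).add
    (((hasDerivAt_pow 5 t).const_mul c4).div_const 5)).add
    (((hasDerivAt_pow 6 t).const_mul c5).div_const 6)).add
    (((hasDerivAt_pow 7 t).const_mul c6).div_const 7)
  convert h using 1
  · rfl
  · rfl
  · rfl
  · push_cast; ring

lemma poly_int (c0 c1 c2 c3 c4 c5 c6 a b : ℝ) :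
    ∫ t in a..b, (c0 + c1 * t + c2 * t ^ 2 + c3 * t ^ 3 + c4 * t ^ 4 + c5 * t ^ 5 + c6 * t ^ 6)
      = (c0 * b + c1 * b ^ 2 / 2 + c2 * b ^ 3 / 3 + c3 * b ^ 4 / 4 + c4 * b ^ 5 / 5
          + c5 * b ^ 6 / 6 + c6 * b ^ 7 / 7)
        - (c0 * a + c1 * a ^ 2 / 2 + c2 * a ^ 3 / 3 + c3 * a ^ 4 / 4 + c4 * a ^ 5 / 5
          + c5 * a ^ 6 / 6 + c6 * a ^ 7 / 7) := by
  refine intervalIntegral.integral_eq_sub_of_hasDerivAt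
    (fun t _ => hasDeriv7 c0 c1 c2 c3 c4 c5 c6 t) ?_
  apply Continuous.intervalIntegrable
  fun_prop

lemma seg (f : ℝ → ℝ) (c0 c1 c2 c3 c4 c5 c6 : ℝ) (a b : ℝ) (hab : a ≤ b)
    (hEq : ∀ t, a ≤ t → t ≤ b →
      f t = c0 + c1 * t + c2 * t ^ 2 + c3 * t ^ 3 + c4 * t ^ 4 + c5 * t ^ 5 + c6 * t ^ 6) :
    IntervalIntegrable f volume a b ∧
    ∫ t in a..b, f t
      = (c0 * b + c1 * b ^ 2 / 2 + c2 * b ^ 3 / 3 + c3 * b ^ 4 / 4 + c4 * b ^ 5 / 5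
          + c5 * b ^ 6 / 6 + c6 * b ^ 7 / 7)
        - (c0 * a + c1 * a ^ 2 / 2 + c2 * a ^ 3 / 3 + c3 * a ^ 4 / 4 + c4 * a ^ 5 / 5
          + c5 * a ^ 6 / 6 + c6 * a ^ 7 / 7) := by
  set P : ℝ → ℝ := fun t =>
    c0 + c1 * t + c2 * t ^ 2 + c3 * t ^ 3 + c4 * t ^ 4 + c5 * t ^ 5 + c6 * t ^ 6 with hP
  have hPc : Continuous P := by fun_prop
  have hEq' : Set.EqOn f P (Set.uIcc a b) := by
    rw [Set.uIcc_of_le hab]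
    intro t ht
    exact hEq t ht.1 ht.2
  constructor
  · rw [intervalIntegrable_iff]
    refine ((hPc.intervalIntegrable a b).def'.congr_fun ?_ measurableSet_uIoc)
    intro t ht
    exact (hEq' (Set.uIoc_subset_uIcc ht)).symm
  · rw [intervalIntegral.integral_congr hEq']
    exact poly_int c0 c1 c2 c3 c4 c5 c6 a b

lemma Im3 : ∫ t in (0:ℝ)..4, N3 t * N3 (t - (-3:ℝ)) = 1/5040 := by
  have s0 := seg (fun t => N3 t * N3 (t - (-3:ℝ))) (0) (0) (0) (1/36) (-(1/12)) (1/12) (-(1/36)) 0 1 (by norm_num)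
    (by intro t h1 h2; beta_reduce; rw [N3_p0 h1 h2, N3_p3 (by linarith) (by linarith)]; ring)
  have s1 := seg (fun t => N3 t * N3 (t - (-3:ℝ))) (0) (0) (0) (0) (0) (0) (0) 1 2 (by norm_num)
    (by intro t h1 h2; beta_reduce; rw [N3_zr (by linarith : (4:ℝ) ≤ t - (-3:ℝ))]; ring)
  have s2 := seg (fun t => N3 t * N3 (t - (-3:ℝ))) (0) (0) (0) (0) (0) (0) (0) 2 3 (by norm_num)
    (by intro t h1 h2; beta_reduce; rw [N3_zr (by linarith : (4:ℝ) ≤ t - (-3:ℝ))]; ring)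
  have s3 := seg (fun t => N3 t * N3 (t - (-3:ℝ))) (0) (0) (0) (0) (0) (0) (0) 3 4 (by norm_num)
    (by intro t h1 h2; beta_reduce; rw [N3_zr (by linarith : (4:ℝ) ≤ t - (-3:ℝ))]; ring)
  rw [← intervalIntegral.integral_add_adjacent_intervals (s0.1.trans s1.1) (s2.1.trans s3.1),
      ← intervalIntegral.integral_add_adjacent_intervals s0.1 s1.1,
      ← intervalIntegral.integral_add_adjacent_intervals s2.1 s3.1,
      s0.2, s1.2, s2.2, s3.2]
  norm_num

lemma Im2 : ∫ t in (0:ℝ)..4, N3 t * N3 (t - (-2:ℝ)) = 1/42 := by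
  have s0 := seg (fun t => N3 t * N3 (t - (-2:ℝ))) (0) (0) (0) (1/9) (0) (-(1/6)) (1/12) 0 1 (by norm_num)
    (by intro t h1 h2; beta_reduce; rw [N3_p0 h1 h2, N3_p2 (by linarith) (by linarith)]; ring)
  have s1 := seg (fun t => N3 t * N3 (t - (-2:ℝ))) (8/9) (-4) (22/3) (-(61/9)) (10/3) (-(5/6)) (1/12) 1 2 (by norm_num)
    (by intro t h1 h2; beta_reduce; rw [N3_p1 h1 h2, N3_p3 (by linarith) (by linarith)]; ring)
  have s2 := seg (fun t => N3 t * N3 (t - (-2:ℝ))) (0) (0) (0) (0) (0) (0) (0) 2 3 (by norm_num)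
    (by intro t h1 h2; beta_reduce; rw [N3_zr (by linarith : (4:ℝ) ≤ t - (-2:ℝ))]; ring)
  have s3 := seg (fun t => N3 t * N3 (t - (-2:ℝ))) (0) (0) (0) (0) (0) (0) (0) 3 4 (by norm_num)
    (by intro t h1 h2; beta_reduce; rw [N3_zr (by linarith : (4:ℝ) ≤ t - (-2:ℝ))]; ring)
  rw [← intervalIntegral.integral_add_adjacent_intervals (s0.1.trans s1.1) (s2.1.trans s3.1),
      ← intervalIntegral.integral_add_adjacent_intervals s0.1 s1.1,
      ← intervalIntegral.integral_add_adjacent_intervals s2.1 s3.1,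
      s0.2, s1.2, s2.2, s3.2]
  norm_num

lemma Im1 : ∫ t in (0:ℝ)..4, N3 t * N3 (t - (-1:ℝ)) = 397/1680 := by
  have s0 := seg (fun t => N3 t * N3 (t - (-1:ℝ))) (0) (0) (0) (1/36) (1/12) (1/12) (-(1/12)) 0 1 (by norm_num)
    (by intro t h1 h2; beta_reduce; rw [N3_p0 h1 h2, N3_p1 (by linarith) (by linarith)]; ring)
  have s1 := seg (fun t => N3 t * N3 (t - (-1:ℝ))) (-(5/9)) (4) (-(31/3)) (51/4) (-(31/4)) (9/4) (-(1/4)) 1 2 (by norm_num)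
    (by intro t h1 h2; beta_reduce; rw [N3_p1 h1 h2, N3_p2 (by linarith) (by linarith)]; ring)
  have s2 := seg (fun t => N3 t * N3 (t - (-1:ℝ))) (-33) (78) (-74) (1313/36) (-(119/12)) (17/12) (-(1/12)) 2 3 (by norm_num)
    (by intro t h1 h2; beta_reduce; rw [N3_p2 h1 h2, N3_p3 (by linarith) (by linarith)]; ring)
  have s3 := seg (fun t => N3 t * N3 (t - (-1:ℝ))) (0) (0) (0) (0) (0) (0) (0) 3 4 (by norm_num)
    (by intro t h1 h2; beta_reduce; rw [N3_zr (by linarith : (4:ℝ) ≤ t - (-1:ℝ))]; ring)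
  rw [← intervalIntegral.integral_add_adjacent_intervals (s0.1.trans s1.1) (s2.1.trans s3.1),
      ← intervalIntegral.integral_add_adjacent_intervals s0.1 s1.1,
      ← intervalIntegral.integral_add_adjacent_intervals s2.1 s3.1,
      s0.2, s1.2, s2.2, s3.2]
  norm_num

lemma Ip0 : ∫ t in (0:ℝ)..4, N3 t * N3 (t - (0:ℝ)) = 151/315 := by
  have s0 := seg (fun t => N3 t * N3 (t - (0:ℝ))) (0) (0) (0) (0) (0) (0) (1/36) 0 1 (by norm_num)
    (by intro t h1 h2; beta_reduce; rw [N3_p0 h1 h2, N3_p0 (by linarith) (by linarith)]; ring)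
  have s1 := seg (fun t => N3 t * N3 (t - (0:ℝ))) (4/9) (-(8/3)) (20/3) (-(26/3)) (6) (-2) (1/4) 1 2 (by norm_num)
    (by intro t h1 h2; beta_reduce; rw [N3_p1 h1 h2, N3_p1 (by linarith) (by linarith)]; ring)
  have s2 := seg (fun t => N3 t * N3 (t - (0:ℝ))) (484/9) (-(440/3)) (476/3) (-(262/3)) (26) (-4) (1/4) 2 3 (by norm_num)
    (by intro t h1 h2; beta_reduce; rw [N3_p2 h1 h2, N3_p2 (by linarith) (by linarith)]; ring)
  have s3 := seg (fun t => N3 t * N3 (t - (0:ℝ))) (1024/9) (-(512/3)) (320/3) (-(320/9)) (20/3) (-(2/3)) (1/36) 3 4 (by norm_num)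
    (by intro t h1 h2; beta_reduce; rw [N3_p3 h1 h2, N3_p3 (by linarith) (by linarith)]; ring)
  rw [← intervalIntegral.integral_add_adjacent_intervals (s0.1.trans s1.1) (s2.1.trans s3.1),
      ← intervalIntegral.integral_add_adjacent_intervals s0.1 s1.1,
      ← intervalIntegral.integral_add_adjacent_intervals s2.1 s3.1,
      s0.2, s1.2, s2.2, s3.2]
  norm_num

lemma Ip1 : ∫ t in (0:ℝ)..4, N3 t * N3 (t - (1:ℝ)) = 397/1680 := by
  have s0 := seg (fun t => N3 t * N3 (t - (1:ℝ))) (0) (0) (0) (0) (0) (0) (0) 0 1 (by norm_num)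
    (by intro t h1 h2; beta_reduce; rw [N3_zl (by linarith : t - (1:ℝ) ≤ 0)]; ring)
  have s1 := seg (fun t => N3 t * N3 (t - (1:ℝ))) (-(1/9)) (2/3) (-(5/3)) (79/36) (-(19/12)) (7/12) (-(1/12)) 1 2 (by norm_num)
    (by intro t h1 h2; beta_reduce; rw [N3_p1 h1 h2, N3_p0 (by linarith) (by linarith)]; ring)
  have s2 := seg (fun t => N3 t * N3 (t - (1:ℝ))) (-(341/9)) (320/3) (-(364/3)) (285/4) (-(91/4)) (15/4) (-(1/4)) 2 3 (by norm_num)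
    (by intro t h1 h2; beta_reduce; rw [N3_p2 h1 h2, N3_p1 (by linarith) (by linarith)]; ring)
  have s3 := seg (fun t => N3 t * N3 (t - (1:ℝ))) (-(2096/9)) (1148/3) (-(775/3)) (3311/36) (-(73/4)) (23/12) (-(1/12)) 3 4 (by norm_num)
    (by intro t h1 h2; beta_reduce; rw [N3_p3 h1 h2, N3_p2 (by linarith) (by linarith)]; ring)
  rw [← intervalIntegral.integral_add_adjacent_intervals (s0.1.trans s1.1) (s2.1.trans s3.1),
      ← intervalIntegral.integral_add_adjacent_intervals s0.1 s1.1,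
      ← intervalIntegral.integral_add_adjacent_intervals s2.1 s3.1,
      s0.2, s1.2, s2.2, s3.2]
  norm_num

lemma Ip2 : ∫ t in (0:ℝ)..4, N3 t * N3 (t - (2:ℝ)) = 1/42 := by
  have s0 := seg (fun t => N3 t * N3 (t - (2:ℝ))) (0) (0) (0) (0) (0) (0) (0) 0 1 (by norm_num)
    (by intro t h1 h2; beta_reduce; rw [N3_zl (by linarith : t - (2:ℝ) ≤ 0)]; ring)
  have s1 := seg (fun t => N3 t * N3 (t - (2:ℝ))) (0) (0) (0) (0) (0) (0) (0) 1 2 (by norm_num)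
    (by intro t h1 h2; beta_reduce; rw [N3_zl (by linarith : t - (2:ℝ) ≤ 0)]; ring)
  have s2 := seg (fun t => N3 t * N3 (t - (2:ℝ))) (88/9) (-28) (98/3) (-(179/9)) (20/3) (-(7/6)) (1/12) 2 3 (by norm_num)
    (by intro t h1 h2; beta_reduce; rw [N3_p2 h1 h2, N3_p0 (by linarith) (by linarith)]; ring)
  have s3 := seg (fun t => N3 t * N3 (t - (2:ℝ))) (1600/9) (-304) (644/3) (-(721/9)) (50/3) (-(11/6)) (1/12) 3 4 (by norm_num)
    (by intro t h1 h2; beta_reduce; rw [N3_p3 h1 h2, N3_p1 (by linarith) (by linarith)]; ring)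
  rw [← intervalIntegral.integral_add_adjacent_intervals (s0.1.trans s1.1) (s2.1.trans s3.1),
      ← intervalIntegral.integral_add_adjacent_intervals s0.1 s1.1,
      ← intervalIntegral.integral_add_adjacent_intervals s2.1 s3.1,
      s0.2, s1.2, s2.2, s3.2]
  norm_num

lemma Ip3 : ∫ t in (0:ℝ)..4, N3 t * N3 (t - (3:ℝ)) = 1/5040 := by
  have s0 := seg (fun t => N3 t * N3 (t - (3:ℝ))) (0) (0) (0) (0) (0) (0) (0) 0 1 (by norm_num)
    (by intro t h1 h2; beta_reduce; rw [N3_zl (by linarith : t - (3:ℝ) ≤ 0)]; ring)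
  have s1 := seg (fun t => N3 t * N3 (t - (3:ℝ))) (0) (0) (0) (0) (0) (0) (0) 1 2 (by norm_num)
    (by intro t h1 h2; beta_reduce; rw [N3_zl (by linarith : t - (3:ℝ) ≤ 0)]; ring)
  have s2 := seg (fun t => N3 t * N3 (t - (3:ℝ))) (0) (0) (0) (0) (0) (0) (0) 2 3 (by norm_num)
    (by intro t h1 h2; beta_reduce; rw [N3_zl (by linarith : t - (3:ℝ) ≤ 0)]; ring)
  have s3 := seg (fun t => N3 t * N3 (t - (3:ℝ))) (-48) (84) (-61) (847/36) (-(61/12)) (7/12) (-(1/36)) 3 4 (by norm_num)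
    (by intro t h1 h2; beta_reduce; rw [N3_p3 h1 h2, N3_p0 (by linarith) (by linarith)]; ring)
  rw [← intervalIntegral.integral_add_adjacent_intervals (s0.1.trans s1.1) (s2.1.trans s3.1),
      ← intervalIntegral.integral_add_adjacent_intervals s0.1 s1.1,
      ← intervalIntegral.integral_add_adjacent_intervals s2.1 s3.1,
      s0.2, s1.2, s2.2, s3.2]
  norm_num

/-- Weighted quadrature, 7 points (interior knots and midpoints inside `supp B_i`),
weights `h·[1/105, 3/35, 5/21, 1/3, 5/21, 3/35, 1/105]`, exactly reproduces
`∫ B_i B_j` for `|j-i| ≤ 3`. -/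
theorem stmt7 (h : ℝ) (hh : 0 < h) (i j : ℤ) (hij : |j - i| ≤ 3) :
    h * (1/105) * B3 h j (((i : ℝ) + 1/2) * h)
      + h * (3/35) * B3 h j (((i : ℝ) + 1) * h)
      + h * (5/21) * B3 h j (((i : ℝ) + 3/2) * h)
      + h * (1/3) * B3 h j (((i : ℝ) + 2) * h)
      + h * (5/21) * B3 h j (((i : ℝ) + 5/2) * h)
      + h * (3/35) * B3 h j (((i : ℝ) + 3) * h)
      + h * (1/105) * B3 h j (((i : ℝ) + 7/2) * h)
      = ∫ ζ : ℝ, B3 h i ζ * B3 h j ζ := by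
  have hne : h ≠ 0 := ne_of_gt hh
  obtain ⟨hk1, hk2⟩ := abs_le.mp hij
  have hB : ∀ c : ℝ, B3 h j (((i : ℝ) + c) * h) = N3 (c - ((j - i : ℤ) : ℝ)) := by
    intro c
    unfold B3
    congr 1
    push_cast
    field_simp
    ring
  -- reduce the integral over ℝ to the interval [i·h, (i+4)·h]
  have hsupp : ∀ ζ : ℝ, ζ ∉ Set.Ioc ((i : ℝ) * h) (((i : ℝ) + 4) * h) →
      B3 h i ζ * B3 h j ζ = 0 := by
    intro ζ hζ
    rw [Set.mem_Ioc, not_and_or] at hζ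
    have : B3 h i ζ = 0 := by
      unfold B3
      rcases hζ with hζ | hζ
      · push_neg at hζ
        refine N3_zl ?_
        rw [sub_nonpos, div_le_iff₀ hh]
        linarith
      · push_neg at hζ
        refine N3_zr ?_
        rw [le_sub_iff_add_le, le_div_iff₀ hh]
        linarith
    rw [this, zero_mul]
  have hle : (i : ℝ) * h ≤ ((i : ℝ) + 4) * h := by nlinarith
  rw [← setIntegral_eq_integral_of_forall_compl_eq_zero hsupp,
      ← intervalIntegral.integral_of_le hle]
  have h1 : (∫ ζ in (i : ℝ) * h..((i : ℝ) + 4) * h, B3 h i ζ * B3 h j ζ)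
      = ∫ ζ in (i : ℝ) * h..((i : ℝ) + 4) * h,
          (fun t => N3 (t - (i : ℝ)) * N3 (t - (i : ℝ) - ((j - i : ℤ) : ℝ))) (ζ / h) := by
    refine intervalIntegral.integral_congr fun ζ _ => ?_
    unfold B3
    push_cast
    ring_nf
  rw [h1, intervalIntegral.integral_comp_div (a := (i : ℝ) * h) (b := ((i : ℝ) + 4) * h)
        (c := h) (fun t => N3 (t - (i : ℝ)) * N3 (t - (i : ℝ) - ((j - i : ℤ) : ℝ))) hne,
      mul_div_cancel_right₀ _ hne, mul_div_cancel_right₀ _ hne,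
      intervalIntegral.integral_comp_sub_right
        (fun s => N3 s * N3 (s - ((j - i : ℤ) : ℝ))) (i : ℝ),
      show (i : ℝ) - (i : ℝ) = 0 by ring, show (i : ℝ) + 4 - (i : ℝ) = 4 by ring,
      smul_eq_mul]
  rw [hB (1/2), hB 1, hB (3/2), hB 2, hB (5/2), hB 3, hB (7/2)]
  set k : ℤ := j - i with hkdef
  clear_value k
  interval_cases k
  · rw [show ((-3 : ℤ) : ℝ) = -3 by norm_num, Im3]; norm_num [N3]; ring
  · rw [show ((-2 : ℤ) : ℝ) = -2 by norm_num, Im2]; norm_num [N3]; ring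
  · rw [show ((-1 : ℤ) : ℝ) = -1 by norm_num, Im1]; norm_num [N3]; ring
  · rw [show ((0 : ℤ) : ℝ) = 0 by norm_num, Ip0]; norm_num [N3]; ring
  · rw [show ((1 : ℤ) : ℝ) = 1 by norm_num, Ip1]; norm_num [N3]; ring
  · rw [show ((2 : ℤ) : ℝ) = 2 by norm_num, Ip2]; norm_num [N3]; ring
  · rw [show ((3 : ℤ) : ℝ) = 3 by norm_num, Ip3]; norm_num [N3]; ring
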